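/- If σ is a subgame perfect equilibrium of the initialized extended game (X, x₀), then for every k ∈ ℕ and every history hv from x₀, the outcome of σ restricted after h starting at v is λ^k-consistent; in particular Λ^k(v) ≠ ∅ for every vertex v reachable from x₀, and the outcome of σ belongs to Λ*(x₀). -/

import Mathlib

open scoped Classical

namespace SPE

variable {V : Type*} {P : Type*}

/-- Vertices of the extended game: a base vertex together with the set of players
having already visited their target set. -/
abbrev XV (V P : Type*) := V × Set P

/-- Edges of the extended game induced by base edges `E` and target sets `F`. -/
def XEdge (E : V → V → Prop) (F : P → Set V) (a b : XV V P) : Prop :=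
  E a.1 b.1 ∧ b.2 = a.2 ∪ {i | b.1 ∈ F i}

/-- Plays of the extended game starting at `x`. -/
def IsPlay (E : V → V → Prop) (F : P → Set V) (x : XV V P) (ρ : ℕ → XV V P) : Prop :=
  ρ 0 = x ∧ ∀ k, XEdge E F (ρ k) (ρ (k + 1))

/-- Cost of player `i` along the suffix `ρ_{≥ n}`: the least `k` such that `i` belongs to
the second component of `ρ (n + k)`, and `⊤` if there is no such `k`. -/
noncomputable def costFrom (ρ : ℕ → XV V P) (n : ℕ) (i : P) : ℕ∞ :=
  sInf ((fun k : ℕ => (k : ℕ∞)) '' {k | i ∈ (ρ (n + k)).2})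

/-- Cost of player `i` along the play `ρ` of the extended game. -/
noncomputable def cost (ρ : ℕ → XV V P) (i : P) : ℕ∞ := costFrom ρ 0 i

/-- `λ`-consistency of a play. -/
def Consistent (own : V → P) (lam : XV V P → ℕ∞) (ρ : ℕ → XV V P) : Prop :=
  ∀ n, costFrom ρ n (own (ρ n).1) ≤ lam (ρ n)

/-- The set `Λ(x)` of `λ`-consistent plays from `x`. -/
def Lam (E : V → V → Prop) (F : P → Set V) (own : V → P) (lam : XV V P → ℕ∞)
    (x : XV V P) : Set (ℕ → XV V P) :=
  {ρ | IsPlay E F x ρ ∧ Consistent own lam ρ}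

/-- The initial labeling `λ⁰`. -/
noncomputable def lam0 (own : V → P) : XV V P → ℕ∞ :=
  fun v => if own v.1 ∈ v.2 then 0 else ⊤

/-- The labeling update operator. -/
noncomputable def update (E : V → V → Prop) (F : P → Set V) (own : V → P)
    (lam : XV V P → ℕ∞) (v : XV V P) : ℕ∞ :=
  if own v.1 ∈ v.2 then 0
  else ⨅ w ∈ {w : XV V P | XEdge E F v w},
    (1 + sSup ((fun ρ => cost ρ (own v.1)) '' Lam E F own lam w))

/-- Prepend a finite list in front of an infinite sequence. -/
def listAppendSeq {α : Type*} (h : List α) (ρ : ℕ → α) : ℕ → α :=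
  fun k => if hk : k < h.length then h.get ⟨k, hk⟩ else ρ (k - h.length)

/-- Validity of a strategy profile in the extended game: the prescribed moves follow edges. -/
def StratValid (E : V → V → Prop) (F : P → Set V)
    (σ : List (XV V P) → XV V P → XV V P) : Prop :=
  ∀ h v, XEdge E F v (σ h v)

/-- The outcome of a strategy profile after history `h` from vertex `v`. -/
def outcome (σ : List (XV V P) → XV V P → XV V P) :
    List (XV V P) → XV V P → ℕ → XV V P
  | _, v, 0 => v
  | h, v, n + 1 => outcome σ (h ++ [v]) (σ h v) n

/-- `h·v` is a history of the initialized extended game `(X, x0)`. -/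
def IsHistoryFrom (E : V → V → Prop) (F : P → Set V) (x0 : XV V P)
    (h : List (XV V P)) (v : XV V P) : Prop :=
  (h ++ [v]).head? = some x0 ∧ (h ++ [v]).Chain' (XEdge E F)

/-- Cost of player `i` of the play `h·ρ` (cost in the subgame after `h`). -/
noncomputable def costAfter (h : List (XV V P)) (ρ : ℕ → XV V P) (i : P) : ℕ∞ :=
  sInf ((fun k : ℕ => (k : ℕ∞)) '' {k | i ∈ (listAppendSeq h ρ k).2})

/-- `τ` is a unilateral deviation of player `i` from the profile `σ`. -/
def Deviation (own : V → P) (σ τ : List (XV V P) → XV V P → XV V P) (i : P) : Prop :=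
  ∀ h v, own v.1 ≠ i → τ h v = σ h v

/-- Subgame perfect equilibrium of the initialized extended game. -/
def IsSPE (E : V → V → Prop) (F : P → Set V) (own : V → P) (x0 : XV V P)
    (σ : List (XV V P) → XV V P → XV V P) : Prop :=
  StratValid E F σ ∧
  ∀ h v, IsHistoryFrom E F x0 h v → ∀ (i : P) τ, StratValid E F τ →
    Deviation own σ τ i →
    costAfter h (outcome σ h v) i ≤ costAfter h (outcome τ h v) i


section Helpers

variable {E : V → V → Prop} {F : P → Set V} {own : V → P} {x0 : XV V P}
variable {σ τ : List (XV V P) → XV V P → XV V P}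

lemma sInf_image_coe {T : Set ℕ} (h : T.Nonempty) :
    sInf ((fun k : ℕ => (k : ℕ∞)) '' T) = ((sInf T : ℕ) : ℕ∞) := by
  refine le_antisymm (sInf_le ⟨_, Nat.sInf_mem h, rfl⟩) (le_sInf ?_)
  rintro c ⟨k, hk, rfl⟩
  exact Nat.cast_le.mpr (Nat.sInf_le hk)

lemma costFrom_eq_zero {ρ : ℕ → XV V P} {n : ℕ} {i : P} (h : i ∈ (ρ n).2) :
    costFrom ρ n i = 0 :=
  le_antisymm (sInf_le ⟨0, by simpa using h, rfl⟩) zero_le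

lemma costFrom_succ {ρ : ℕ → XV V P} {n : ℕ} {i : P} (h : i ∉ (ρ n).2) :
    costFrom ρ n i = 1 + costFrom ρ (n + 1) i := by
  have hST : {k | i ∈ (ρ (n + k)).2}
      = (fun m => m + 1) '' {k | i ∈ (ρ (n + 1 + k)).2} := by
    ext k
    simp only [Set.mem_setOf_eq, Set.mem_image]
    constructor
    · intro hk
      have hk0 : k ≠ 0 := by
        intro h0
        subst h0
        exact h (by simpa using hk)
      obtain ⟨m, rfl⟩ := Nat.exists_eq_succ_of_ne_zero hk0
      exact ⟨m, by rw [show n + 1 + m = n + (m + 1) from by omega]; exact hk, rfl⟩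
    · rintro ⟨m, hm, rfl⟩
      rw [show n + (m + 1) = n + 1 + m from by omega]
      exact hm
  rcases Set.eq_empty_or_nonempty {k | i ∈ (ρ (n + 1 + k)).2} with hTe | hTn
  · unfold costFrom
    rw [hST, hTe]
    simp
  · have hmemS : sInf {k | i ∈ (ρ (n + 1 + k)).2} + 1 ∈ {k | i ∈ (ρ (n + k)).2} := by
      rw [hST]
      exact ⟨_, Nat.sInf_mem hTn, rfl⟩
    have hSn : Set.Nonempty {k | i ∈ (ρ (n + k)).2} := ⟨_, hmemS⟩
    unfold costFrom
    rw [sInf_image_coe hSn, sInf_image_coe hTn]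
    have heq : sInf {k | i ∈ (ρ (n + k)).2}
        = sInf {k | i ∈ (ρ (n + 1 + k)).2} + 1 := by
      refine le_antisymm (Nat.sInf_le hmemS) ?_
      obtain ⟨m, hm, hme⟩ := (Set.ext_iff.mp hST _).mp (Nat.sInf_mem hSn)
      calc sInf {k | i ∈ (ρ (n + 1 + k)).2} + 1 ≤ m + 1 :=
            Nat.add_le_add_right (Nat.sInf_le hm) 1
        _ = sInf {k | i ∈ (ρ (n + k)).2} := hme
    rw [heq]
    push_cast
    rw [add_comm]

lemma costFrom_add {ρ : ℕ → XV V P} {i : P} :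
    ∀ n, (∀ j < n, i ∉ (ρ j).2) → costFrom ρ 0 i = n + costFrom ρ n i := by
  intro n
  induction n with
  | zero => intro _; simp
  | succ n IH =>
    intro hj
    rw [IH (fun j hjn => hj j (Nat.lt_succ_of_lt hjn)),
      costFrom_succ (hj n (Nat.lt_succ_self n))]
    push_cast
    rw [← add_assoc]

lemma costAfter_eq {h : List (XV V P)} {ρ : ℕ → XV V P} {i : P}
    (hh : ∀ x ∈ h, i ∉ x.2) :
    costAfter h ρ i = h.length + cost ρ i := by
  have e : costAfter h ρ i = costFrom (listAppendSeq h ρ) 0 i := by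
    unfold costAfter costFrom
    simp
  have hnotin : ∀ j < h.length, i ∉ (listAppendSeq h ρ j).2 := by
    intro j hj
    unfold listAppendSeq
    rw [dif_pos hj]
    exact hh _ (List.get_mem h ⟨j, hj⟩)
  rw [e, costFrom_add h.length hnotin]
  congr 1
  have hshift : ∀ k, listAppendSeq h ρ (h.length + k) = ρ k := by
    intro k
    unfold listAppendSeq
    rw [dif_neg (by omega)]
    congr 1
    omega
  simp only [cost, costFrom, hshift, Nat.zero_add]

lemma outcome_edge (hσ : StratValid E F σ) :
    ∀ (k : ℕ) (h : List (XV V P)) (v : XV V P),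
      XEdge E F (outcome σ h v k) (outcome σ h v (k + 1))
  | 0, h, v => hσ h v
  | (k + 1), h, v => outcome_edge hσ k (h ++ [v]) (σ h v)

lemma outcome_is_play (hσ : StratValid E F σ) (h : List (XV V P)) (v : XV V P) :
    IsPlay E F v (outcome σ h v) :=
  ⟨rfl, fun k => outcome_edge hσ k h v⟩

lemma outcome_shift :
    ∀ (n : ℕ) (h : List (XV V P)) (v : XV V P) (m : ℕ),
      outcome σ (h ++ List.ofFn fun j : Fin n => outcome σ h v j)
        (outcome σ h v n) m = outcome σ h v (n + m) := by
  intro n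
  induction n with
  | zero =>
    intro h v m
    simp only [List.ofFn_zero, List.append_nil, Nat.zero_add]
    rfl
  | succ n IH =>
    intro h v m
    have h1 : (List.ofFn fun j : Fin (n + 1) => outcome σ h v j)
        = v :: List.ofFn (fun j : Fin n => outcome σ (h ++ [v]) (σ h v) j) := by
      rw [List.ofFn_succ]
      rfl
    have h2 : outcome σ h v (n + 1) = outcome σ (h ++ [v]) (σ h v) n := rfl
    have h3 : outcome σ h v (n + 1 + m) = outcome σ (h ++ [v]) (σ h v) (n + m) := by
      rw [show n + 1 + m = (n + m) + 1 from by omega]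
      rfl
    rw [h1, h2, h3, show h ++ (v :: List.ofFn fun j : Fin n =>
      outcome σ (h ++ [v]) (σ h v) j) = (h ++ [v]) ++ List.ofFn (fun j : Fin n =>
      outcome σ (h ++ [v]) (σ h v) j) from by simp]
    exact IH (h ++ [v]) (σ h v) m

lemma history_snoc {h : List (XV V P)} {v w : XV V P}
    (hist : IsHistoryFrom E F x0 h v) (he : XEdge E F v w) :
    IsHistoryFrom E F x0 (h ++ [v]) w := by
  obtain ⟨h1, h2⟩ := hist
  constructor
  · cases h with
    | nil => simpa using h1
    | cons a t => simpa using h1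
  · refine List.isChain_append.mpr ⟨h2, by simp, ?_⟩
    intro x hx y hy
    simp only [List.getLast?_concat, Option.mem_def, Option.some.injEq] at hx
    simp only [List.head?_cons, Option.mem_def, Option.some.injEq] at hy
    rw [← hx, ← hy]
    exact he

lemma history_mono {h : List (XV V P)} {v : XV V P}
    (hist : IsHistoryFrom E F x0 h v) : ∀ x ∈ h, x.2 ⊆ v.2 := by
  obtain ⟨-, h2⟩ := hist
  have hc : (h ++ [v]).Chain' (fun a b : XV V P => a.2 ⊆ b.2) :=
    h2.imp (fun a b e => by rw [e.2]; exact Set.subset_union_left)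
  haveI : IsTrans (XV V P) (fun a b : XV V P => a.2 ⊆ b.2) :=
    ⟨fun _ _ _ => Set.Subset.trans⟩
  have hp := List.isChain_iff_pairwise.mp hc
  rw [List.pairwise_append] at hp
  exact fun x hx => hp.2.2 x hx v (by simp)

lemma history_outcome (hσ : StratValid E F σ) {h : List (XV V P)} {v : XV V P}
    (hist : IsHistoryFrom E F x0 h v) :
    ∀ n, IsHistoryFrom E F x0
      (h ++ List.ofFn fun j : Fin n => outcome σ h v j) (outcome σ h v n) := by
  intro n
  induction n with
  | zero => simpa [outcome] using hist
  | succ n IH =>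
    have hlist : (List.ofFn fun j : Fin (n + 1) => outcome σ h v j)
        = (List.ofFn fun j : Fin n => outcome σ h v j) ++ [outcome σ h v n] := by
      rw [List.ofFn_succ']
      simp [List.concat_eq_append]
    rw [hlist, ← List.append_assoc]
    exact history_snoc IH (outcome_edge hσ n h v)

lemma outcome_congr {L : ℕ} (hagree : ∀ g u, L < g.length → τ g u = σ g u) :
    ∀ (m : ℕ) (g : List (XV V P)) (u : XV V P), L < g.length →
      outcome τ g u m = outcome σ g u m
  | 0, _, _, _ => rfl
  | (m + 1), g, u, hg => by
    show outcome τ (g ++ [u]) (τ g u) m = outcome σ (g ++ [u]) (σ g u) m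
    rw [hagree g u hg]
    exact outcome_congr hagree m (g ++ [u]) (σ g u) (by simp; omega)

lemma exists_history (hr : Relation.ReflTransGen (XEdge E F) x0 v) :
    ∃ h, IsHistoryFrom E F x0 h v := by
  induction hr with
  | refl => exact ⟨[], by constructor <;> simp [List.Chain', List.isChain_singleton]⟩
  | tail _ hbc IH =>
    obtain ⟨h, hh⟩ := IH
    exact ⟨h ++ [_], history_snoc hh hbc⟩

lemma main_consistent (hσ : IsSPE E F own x0 σ)
    (lam : ℕ → XV V P → ℕ∞) (h0 : lam 0 = lam0 own)
    (hstep : ∀ k w, lam (k + 1) w = lam k w ∨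
      lam (k + 1) w = update E F own (lam k) w) :
    ∀ k h v, IsHistoryFrom E F x0 h v →
      Consistent own (lam k) fun n => outcome σ h v n := by
  intro k
  induction k with
  | zero =>
    intro h v _ n
    simp only
    rw [h0]
    unfold lam0
    by_cases hw : own (outcome σ h v n).1 ∈ (outcome σ h v n).2
    · rw [if_pos hw, costFrom_eq_zero hw]
    · rw [if_neg hw]; exact le_top
  | succ k IH =>
    intro h v hist n
    simp only
    set ρ : ℕ → XV V P := fun n => outcome σ h v n with hρ
    rcases hstep k (ρ n) with hcase | hcase
    · rw [hcase]; exact IH h v hist n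
    · rw [hcase]
      unfold update
      by_cases hmem : own (ρ n).1 ∈ (ρ n).2
      · rw [if_pos hmem, costFrom_eq_zero hmem]
      · rw [if_neg hmem]
        refine le_iInf₂ fun w' hw' => ?_
        set i := own (ρ n).1 with hi
        set h2 := h ++ List.ofFn fun j : Fin n => outcome σ h v j with hh2
        have hist2 : IsHistoryFrom E F x0 h2 (ρ n) := history_outcome hσ.1 hist n
        set τ : List (XV V P) → XV V P → XV V P :=
          fun g u => if g = h2 ∧ u = ρ n then w' else σ g u with hτ
        have hτvalid : StratValid E F τ := by
          intro g u
          by_cases hc : g = h2 ∧ u = ρ n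
          · simp only [hτ, if_pos hc]
            rw [hc.2]
            exact hw'
          · simp only [hτ, if_neg hc]
            exact hσ.1 g u
        have hdev : Deviation own σ τ i := by
          intro g u hne
          by_cases hc : g = h2 ∧ u = ρ n
          · exact absurd (hc.2 ▸ rfl : own u.1 = i) hne
          · simp only [hτ, if_neg hc]
        have hSPE := hσ.2 h2 (ρ n) hist2 i τ hτvalid hdev
        have hχσ : ∀ m, outcome σ h2 (ρ n) m = ρ (n + m) := fun m =>
          outcome_shift n h v m
        have hτouts : ∀ m, outcome τ h2 (ρ n) (m + 1)
            = outcome σ (h2 ++ [ρ n]) w' m := by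
          intro m
          show outcome τ (h2 ++ [ρ n]) (τ h2 (ρ n)) m = _
          have ht : τ h2 (ρ n) = w' := by simp [hτ]
          rw [ht]
          refine outcome_congr (L := h2.length) ?_ m _ _ (by simp)
          intro g u hg
          simp only [hτ]
          rw [if_neg]
          rintro ⟨rfl, -⟩
          omega
        have hnotin : ∀ x ∈ h2, i ∉ x.2 := fun x hx hix =>
          hmem (history_mono hist2 x hx hix)
        have hc1 : costAfter h2 (outcome σ h2 (ρ n)) i
            = h2.length + cost (outcome σ h2 (ρ n)) i := costAfter_eq hnotin
        have hc2 : costAfter h2 (outcome τ h2 (ρ n)) i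
            = h2.length + cost (outcome τ h2 (ρ n)) i := costAfter_eq hnotin
        have hcancel : cost (outcome σ h2 (ρ n)) i ≤ cost (outcome τ h2 (ρ n)) i := by
          rw [hc1, hc2] at hSPE
          exact (WithTop.add_le_add_iff_left (ENat.coe_ne_top _)).mp hSPE
        have hcostσ : costFrom ρ n i = cost (outcome σ h2 (ρ n)) i := by
          simp only [cost, costFrom, Nat.zero_add, hχσ]
        have hcostτ : cost (outcome τ h2 (ρ n)) i
            = 1 + cost (outcome σ (h2 ++ [ρ n]) w') i := by
          unfold cost
          rw [costFrom_succ (show i ∉ (outcome τ h2 (ρ n) 0).2 from hmem)]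
          congr 1
          simp only [costFrom, Nat.zero_add]
          have hseteq : {m | i ∈ (outcome τ h2 (ρ n) (1 + m)).2}
              = {m | i ∈ (outcome σ (h2 ++ [ρ n]) w' m).2} := by
            ext m
            simp only [Set.mem_setOf_eq]
            rw [show 1 + m = m + 1 from by omega, hτouts]
          rw [hseteq]
        have hist3 : IsHistoryFrom E F x0 (h2 ++ [ρ n]) w' := history_snoc hist2 hw'
        have hχ'mem : (fun m => outcome σ (h2 ++ [ρ n]) w' m)
            ∈ Lam E F own (lam k) w' :=
          ⟨outcome_is_play hσ.1 _ _, IH (h2 ++ [ρ n]) w' hist3⟩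
        have hle : cost (outcome σ (h2 ++ [ρ n]) w') i
            ≤ sSup ((fun ρ => cost ρ i) '' Lam E F own (lam k) w') :=
          le_sSup ⟨_, hχ'mem, rfl⟩
        calc costFrom ρ n i = cost (outcome σ h2 (ρ n)) i := hcostσ
          _ ≤ cost (outcome τ h2 (ρ n)) i := hcancel
          _ = 1 + cost (outcome σ (h2 ++ [ρ n]) w') i := hcostτ
          _ ≤ 1 + sSup ((fun ρ => cost ρ i) '' Lam E F own (lam k) w') :=
              add_le_add_right hle 1

end Helpers

/-- if `σ` is an SPE of the initialized extended game `(X, x₀)` then,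
for every `k` and every history `h·v` from `x₀`, the outcome of `σ` restricted after
`h` from `v` is `λ^k`-consistent; in particular `Λ*(v) ≠ ∅` for every `v` reachable
from `x₀`, and the outcome of `σ` belongs to `Λ*(x₀)`. -/
theorem stmt8 {V P : Type*} [Fintype V] [Fintype P]
    (E : V → V → Prop) (F : P → Set V) (own : V → P) (x0 : XV V P)
    (σ : List (XV V P) → XV V P → XV V P) (hσ : IsSPE E F own x0 σ)
    (lam : ℕ → XV V P → ℕ∞) (h0 : lam 0 = lam0 own)
    (hstep : ∀ k w, lam (k + 1) w = lam k w ∨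
      lam (k + 1) w = update E F own (lam k) w)
    (kstar : ℕ) (hfix : ∀ m, lam (kstar + m) = lam kstar) :
    (∀ k h v, IsHistoryFrom E F x0 h v →
      Consistent own (lam k) fun n => outcome σ h v n) ∧
    (∀ v, Relation.ReflTransGen (XEdge E F) x0 v →
      (Lam E F own (lam kstar) v).Nonempty) ∧
    (fun n => outcome σ [] x0 n) ∈ Lam E F own (lam kstar) x0 := by
  have main := main_consistent hσ lam h0 hstep
  have hx0 : IsHistoryFrom E F x0 ([] : List (XV V P)) x0 := by
    constructor <;> simp [List.Chain', List.isChain_singleton]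
  refine ⟨main, ?_, ⟨outcome_is_play hσ.1 [] x0, main kstar [] x0 hx0⟩⟩
  intro v hv
  obtain ⟨h, hh⟩ := exists_history hv
  exact ⟨fun n => outcome σ h v n, outcome_is_play hσ.1 h v, main kstar h v hh⟩

end SPE
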